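/- Let K be an O-cocomplete O-category, F : K → K a locally continuous functor, and k : K₀ → F K₀ an embedding. Let κ : Φ ⇒ A be an O-colimit of the ω-chain Φ : K₀ → FK₀ → F²K₀ → ⋯ generated by k (with connecting maps F^n k). Then the morphism fold = ⊔_n κ_{n+1} ∘ F(κ_n^p) : F A → A is an isomorphism, with inverse unfold = ⊔_n F(κ_n) ∘ κ_{n+1}^p : A → F A. In particular A ≅ F A. -/

import Mathlib

open CategoryTheory OmegaCompletePartialOrder

universe v u

class OHom (K : Type u) [Category.{v} K] where
  homOrder : ∀ X Y : K, OmegaCompletePartialOrder (X ⟶ Y)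

attribute [instance] OHom.homOrder

/-- An O-category: a category enriched in dcpos with continuous composition. -/
class OCat (K : Type u) [Category.{v} K] extends OHom K where
  comp_mono : ∀ {X Y Z : K} {f f' : X ⟶ Y} {g g' : Y ⟶ Z},
    f ≤ f' → g ≤ g' → f ≫ g ≤ f' ≫ g'
  comp_cont_left : ∀ {X Y Z : K} (g : Y ⟶ Z) (c : Chain (X ⟶ Y))
    (hm : Monotone fun n => c n ≫ g),
    ωSup c ≫ g = ωSup ⟨fun n => c n ≫ g, hm⟩
  comp_cont_right : ∀ {X Y Z : K} (f : X ⟶ Y) (c : Chain (Y ⟶ Z))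
    (hm : Monotone fun n => f ≫ c n),
    f ≫ ωSup c = ωSup ⟨fun n => f ≫ c n, hm⟩

/-- Iterated application of an endofunctor to an object: `pob F X n = Fⁿ X`. -/
def pob {K : Type u} [Category.{v} K] (F : K ⥤ K) (X : K) : ℕ → K
  | 0 => X
  | n + 1 => F.obj (pob F X n)

/-- The links `Fⁿ k : Fⁿ X ⟶ Fⁿ⁺¹ X` of the ω-chain generated by a first link
`k : X ⟶ F X`. -/
def plink {K : Type u} [Category.{v} K] (F : K ⥤ K) {X : K} (k : X ⟶ F.obj X) :
    ∀ n, pob F X n ⟶ pob F X (n + 1)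
  | 0 => k
  | n + 1 => F.map (plink F k n)

/-- If κ : Φ ⇒ A is an O-colimit of the ω-chain X ⟶ FX ⟶ F²X ⟶ ⋯
generated by an embedding k : X ⟶ FX, for F locally continuous, then
fold = ⊔ₙ κ_{n+1} ∘ F(κ_n^p) : FA ⟶ A is an isomorphism with inverse
unfold = ⊔ₙ F(κ_n) ∘ κ_{n+1}^p; in particular A ≅ FA. -/

lemma ωSup_congr' {α} [OmegaCompletePartialOrder α] (c d : Chain α)
    (h : ∀ n, c n = d n) : ωSup c = ωSup d :=
  le_antisymm (ωSup_le _ _ fun n => h n ▸ le_ωSup d n)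
    (ωSup_le _ _ fun n => (h n) ▸ le_ωSup c n)

lemma ωSup_shift' {α} [OmegaCompletePartialOrder α] (c : Chain α)
    (hm : Monotone fun n => c (n + 1)) :
    ωSup (⟨fun n => c (n + 1), hm⟩ : Chain α) = ωSup c :=
  le_antisymm (ωSup_le _ _ fun n => le_ωSup c (n + 1))
    (ωSup_le _ _ fun n =>
      le_trans (c.monotone (Nat.le_succ n)) (le_ωSup (⟨fun n => c (n + 1), hm⟩ : Chain α) n))

lemma ωSup_comp' {K : Type u} [Category.{v} K] [OCat K] {X Y Z : K}
    (c : Chain (X ⟶ Y)) (d : Chain (Y ⟶ Z))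
    (hm : Monotone fun n => c n ≫ d n) :
    ωSup c ≫ ωSup d = ωSup (⟨fun n => c n ≫ d n, hm⟩ : Chain (X ⟶ Z)) := by
  apply le_antisymm
  · have h1 : Monotone fun n => c n ≫ ωSup d :=
      fun a b h => OCat.comp_mono (c.monotone h) le_rfl
    rw [OCat.comp_cont_left (ωSup d) c h1]
    apply ωSup_le
    intro n
    show c n ≫ ωSup d ≤ _
    have h2 : Monotone fun m => c n ≫ d m :=
      fun a b h => OCat.comp_mono le_rfl (d.monotone h)
    rw [OCat.comp_cont_right (c n) d h2]
    apply ωSup_le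
    intro m
    calc c n ≫ d m ≤ c (max n m) ≫ d (max n m) :=
          OCat.comp_mono (c.monotone (le_max_left n m)) (d.monotone (le_max_right n m))
      _ ≤ _ := le_ωSup (⟨fun n => c n ≫ d n, hm⟩ : Chain (X ⟶ Z)) (max n m)
  · exact ωSup_le _ _ fun n => OCat.comp_mono (le_ωSup c n) (le_ωSup d n)

theorem fold_unfold_iso {K : Type u} [Category.{v} K] [OCat K]
    (F : K ⥤ K)
    (hFmono : ∀ {X Y : K} {f g : X ⟶ Y}, f ≤ g → F.map f ≤ F.map g)
    (hFcont : ∀ {X Y : K} (c : Chain (X ⟶ Y))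
      (hm : Monotone fun n => F.map (c n)),
      F.map (ωSup c) = ωSup ⟨fun n => F.map (c n), hm⟩)
    (X : K) (k : X ⟶ F.obj X) (kp : F.obj X ⟶ X)
    (hk₁ : k ≫ kp = 𝟙 X) (hk₂ : kp ≫ k ≤ 𝟙 (F.obj X))
    (A : K) (κ : ∀ n, pob F X n ⟶ A) (κp : ∀ n, A ⟶ pob F X n)
    (hcocone : ∀ n, plink F k n ≫ κ (n + 1) = κ n)
    (hκ₁ : ∀ n, κ n ≫ κp n = 𝟙 (pob F X n)) (hκ₂ : ∀ n, κp n ≫ κ n ≤ 𝟙 A)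
    (hκmono : Monotone fun n => κp n ≫ κ n)
    (hκsup : ωSup ⟨fun n => κp n ≫ κ n, hκmono⟩ = 𝟙 A) :
    ∀ (hf : Monotone fun n => F.map (κp n) ≫ κ (n + 1))
      (hu : Monotone fun n => κp (n + 1) ≫ F.map (κ n)),
      (ωSup ⟨fun n => F.map (κp n) ≫ κ (n + 1), hf⟩
          ≫ ωSup ⟨fun n => κp (n + 1) ≫ F.map (κ n), hu⟩ = 𝟙 (F.obj A)) ∧
      (ωSup ⟨fun n => κp (n + 1) ≫ F.map (κ n), hu⟩
          ≫ ωSup ⟨fun n => F.map (κp n) ≫ κ (n + 1), hf⟩ = 𝟙 A) := by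
  intro hf hu
  set c : Chain (F.obj A ⟶ A) := ⟨fun n => F.map (κp n) ≫ κ (n + 1), hf⟩ with hc
  set d : Chain (A ⟶ F.obj A) := ⟨fun n => κp (n + 1) ≫ F.map (κ n), hu⟩ with hd
  have hmcd : Monotone fun n => c n ≫ d n := fun a b h => OCat.comp_mono (hf h) (hu h)
  have hmdc : Monotone fun n => d n ≫ c n := fun a b h => OCat.comp_mono (hu h) (hf h)
  have hmF : Monotone fun n => F.map (κp n ≫ κ n) := fun a b h => hFmono (hκmono h)
  have hms : Monotone fun n => κp (n + 1) ≫ κ (n + 1) :=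
    fun a b h => hκmono (Nat.succ_le_succ h)
  have key : ∀ {P Q R S : K} (a : P ⟶ Q) (b : Q ⟶ R) (e : R ⟶ Q) (g : Q ⟶ S),
      b ≫ e = 𝟙 Q → (a ≫ b) ≫ (e ≫ g) = a ≫ g := by
    intro P Q R S a b e g hbe
    rw [Category.assoc, ← Category.assoc b, hbe, Category.id_comp]
  constructor
  · rw [ωSup_comp' c d hmcd]
    have heq : ∀ n, c n ≫ d n = F.map (κp n ≫ κ n) := by
      intro n
      show (F.map (κp n) ≫ κ (n + 1)) ≫ (κp (n + 1) ≫ F.map (κ n)) = _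
      rw [F.map_comp]
      exact key (F.map (κp n)) (κ (n + 1)) (κp (n + 1)) (F.map (κ n)) (hκ₁ (n + 1))
    rw [ωSup_congr' _ ⟨fun n => F.map (κp n ≫ κ n), hmF⟩ heq, ← F.map_id, ← hκsup,
      hFcont ⟨fun n => κp n ≫ κ n, hκmono⟩ hmF]
    exact ωSup_congr' _ _ fun n => rfl
  · rw [ωSup_comp' d c hmdc]
    have heq : ∀ n, d n ≫ c n = κp (n + 1) ≫ κ (n + 1) := by
      intro n
      show (κp (n + 1) ≫ F.map (κ n)) ≫ (F.map (κp n) ≫ κ (n + 1)) = _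
      have h : F.map (κ n) ≫ F.map (κp n) = 𝟙 (F.obj (pob F X n)) := by
        rw [← F.map_comp, hκ₁ n, F.map_id]
      exact key (κp (n + 1)) (F.map (κ n)) (F.map (κp n)) (κ (n + 1)) h
    rw [ωSup_congr' _ ⟨fun n => κp (n + 1) ≫ κ (n + 1), hms⟩ heq, ← hκsup,
      ← ωSup_shift' ⟨fun n => κp n ≫ κ n, hκmono⟩ hms]
    exact ωSup_congr' _ _ fun n => rfl
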